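/- arXiv:1711.02400 — 2 statements merged into one kernel-verified Lean document; each statement's English description precedes it below -/
import Mathlib

section
/- Let Φ : Ω₀ → ℝ be continuous on the exterior domain Ω₀ = {x ∈ ℝ² : |x| ≥ R₀} and satisfy the maximum principle on bounded annular subdomains: for all R₀ ≤ R₁ < R₂, sup over the closed annulus {R₁ ≤ |x| ≤ R₂} of Φ equals the sup of Φ over the two boundary circles. If there is a sequence of points x_k with |x_k| → ∞ and Φ(x_k) → +∞, and a sequence of radii R_m → ∞ with sup_{C_{R_m}} Φ − inf_{C_{R_m}} Φ → 0, then inf_{C_{R_m}} Φ → +∞. -/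
open Real MeasureTheory Filter Topology

theorem stmt_3 (Φ : ℝ × ℝ → ℝ) (R₀ : ℝ) (hR₀ : 0 < R₀)
    (hcont : ContinuousOn Φ {x : ℝ × ℝ | R₀ ≤ ‖x‖})
    (hmax : ∀ R₁ R₂ : ℝ, R₀ ≤ R₁ → R₁ < R₂ →
      sSup (Φ '' {x : ℝ × ℝ | R₁ ≤ ‖x‖ ∧ ‖x‖ ≤ R₂}) =
      sSup (Φ '' (Metric.sphere (0:ℝ×ℝ) R₁ ∪ Metric.sphere (0:ℝ×ℝ) R₂)))
    (x : ℕ → ℝ × ℝ) (hxin : ∀ k, R₀ ≤ ‖x k‖)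
    (hx1 : Tendsto (fun k => ‖x k‖) atTop atTop)
    (hx2 : Tendsto (fun k => Φ (x k)) atTop atTop)
    (Rm : ℕ → ℝ) (hRm0 : ∀ m, R₀ ≤ Rm m)
    (hRm : Tendsto Rm atTop atTop)
    (hosc : Tendsto (fun m =>
        sSup (Φ '' Metric.sphere (0:ℝ×ℝ) (Rm m)) -
        sInf (Φ '' Metric.sphere (0:ℝ×ℝ) (Rm m))) atTop (𝓝 0)) :
    Tendsto (fun m => sInf (Φ '' Metric.sphere (0:ℝ×ℝ) (Rm m))) atTop atTop := by
  -- sphere facts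
  have hsub : ∀ R : ℝ, R₀ ≤ R → Metric.sphere (0:ℝ×ℝ) R ⊆ {x : ℝ × ℝ | R₀ ≤ ‖x‖} := by
    intro R hR y hy
    simp only [Metric.mem_sphere, dist_zero_right] at hy
    simpa [hy] using hR
  have hne : ∀ R : ℝ, R₀ ≤ R → (Φ '' Metric.sphere (0:ℝ×ℝ) R).Nonempty := by
    intro R hR
    exact (NormedSpace.sphere_nonempty.2 (le_trans hR₀.le hR)).image _
  have hbdd : ∀ R : ℝ, R₀ ≤ R → BddAbove (Φ '' Metric.sphere (0:ℝ×ℝ) R) := by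
    intro R hR
    exact ((isCompact_sphere 0 R).image_of_continuousOn (hcont.mono (hsub R hR))).bddAbove
  by_contra hcon
  rw [tendsto_atTop] at hcon
  push_neg at hcon
  obtain ⟨b, hb⟩ := hcon
  have hb' : ∃ᶠ m in atTop,
      sInf (Φ '' Metric.sphere (0:ℝ×ℝ) (Rm m)) < b := by
    apply hb.mono; intro m hm; exact hm
  have hosc1 : ∀ᶠ m in atTop,
      sSup (Φ '' Metric.sphere (0:ℝ×ℝ) (Rm m)) -
      sInf (Φ '' Metric.sphere (0:ℝ×ℝ) (Rm m)) < 1 :=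
    hosc.eventually_lt_const one_pos
  have hfreq : ∃ᶠ m in atTop, sSup (Φ '' Metric.sphere (0:ℝ×ℝ) (Rm m)) < b + 1 := by
    apply (hb'.and_eventually hosc1).mono
    rintro m ⟨h1, h2⟩
    linarith
  -- pick m₁
  obtain ⟨m₁, hm₁⟩ := hfreq.exists
  -- pick k
  obtain ⟨k, hk1, hk2⟩ :=
    ((hx1.eventually_gt_atTop (Rm m₁)).and (hx2.eventually_gt_atTop (b + 1))).exists
  -- pick m₂
  obtain ⟨m₂, hm₂, hm₂R⟩ :=
    (hfreq.and_eventually (hRm.eventually_gt_atTop ‖x k‖)).exists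
  have hR12 : Rm m₁ < Rm m₂ := lt_trans hk1 hm₂R
  -- the annulus
  set A : Set (ℝ × ℝ) := {y : ℝ × ℝ | Rm m₁ ≤ ‖y‖ ∧ ‖y‖ ≤ Rm m₂} with hA
  have hAsub : A ⊆ {x : ℝ × ℝ | R₀ ≤ ‖x‖} := fun y hy => le_trans (hRm0 m₁) hy.1
  have hAclosed : IsClosed A := by
    have : A = {y : ℝ × ℝ | Rm m₁ ≤ ‖y‖} ∩ {y : ℝ × ℝ | ‖y‖ ≤ Rm m₂} := rfl
    rw [this]
    exact (isClosed_le continuous_const continuous_norm).inter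
      (isClosed_le continuous_norm continuous_const)
  have hAcomp : IsCompact A := by
    apply (isCompact_closedBall (0:ℝ×ℝ) (Rm m₂)).of_isClosed_subset hAclosed
    intro y hy
    simpa [Metric.mem_closedBall, dist_zero_right] using hy.2
  have hAbdd : BddAbove (Φ '' A) :=
    (hAcomp.image_of_continuousOn (hcont.mono hAsub)).bddAbove
  have hxA : x k ∈ A := ⟨hk1.le, hm₂R.le⟩
  have hle : Φ (x k) ≤ sSup (Φ '' A) := le_csSup hAbdd ⟨x k, hxA, rfl⟩
  rw [hmax (Rm m₁) (Rm m₂) (hRm0 m₁) hR12, Set.image_union,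
    csSup_union (hbdd _ (hRm0 m₁)) (hne _ (hRm0 m₁)) (hbdd _ (hRm0 m₂)) (hne _ (hRm0 m₂))]
      at hle
  have := lt_of_le_of_lt hle (sup_lt_iff.2 ⟨hm₁, hm₂⟩)
  linarith
end

section
/- Let (u, p) be a smooth solution on an open set U ⊂ ℝ² of −ν Δu + (u·∇)u + ∇p = 0, div u = 0, with Φ = p + ½|u|² and ω = ∂₁u₂ − ∂₂u₁. Then ΔΦ = ω² + (1/ν) div(Φ u) holds on U. -/
open Real

/-- Partial derivative in the first coordinate direction. -/
noncomputable def pdx (f : ℝ × ℝ → ℝ) : ℝ × ℝ → ℝ := fun x => fderiv ℝ f x (1, 0)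

/-- Partial derivative in the second coordinate direction. -/
noncomputable def pdy (f : ℝ × ℝ → ℝ) : ℝ × ℝ → ℝ := fun x => fderiv ℝ f x (0, 1)

noncomputable def pd (v : ℝ × ℝ) (f : ℝ × ℝ → ℝ) : ℝ × ℝ → ℝ := fun x => fderiv ℝ f x v

lemma pdx_eq : pdx = pd (1, 0) := rfl
lemma pdy_eq : pdy = pd (0, 1) := rfl

lemma pd_add {f g : ℝ × ℝ → ℝ} {x : ℝ × ℝ} (hf : DifferentiableAt ℝ f x)
    (hg : DifferentiableAt ℝ g x) (v : ℝ × ℝ) :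
    pd v (fun y => f y + g y) x = pd v f x + pd v g x := by
  simp [pd, fderiv_fun_add hf hg]

lemma pd_sub {f g : ℝ × ℝ → ℝ} {x : ℝ × ℝ} (hf : DifferentiableAt ℝ f x)
    (hg : DifferentiableAt ℝ g x) (v : ℝ × ℝ) :
    pd v (fun y => f y - g y) x = pd v f x - pd v g x := by
  simp [pd, fderiv_fun_sub hf hg]

lemma pd_mul {f g : ℝ × ℝ → ℝ} {x : ℝ × ℝ} (hf : DifferentiableAt ℝ f x)
    (hg : DifferentiableAt ℝ g x) (v : ℝ × ℝ) :
    pd v (fun y => f y * g y) x = pd v f x * g x + f x * pd v g x := by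
  simp [pd, fderiv_fun_mul hf hg]; ring

lemma pd_const_mul {f : ℝ × ℝ → ℝ} {x : ℝ × ℝ} (hf : DifferentiableAt ℝ f x) (c : ℝ) (v : ℝ × ℝ) :
    pd v (fun y => c * f y) x = c * pd v f x := by
  simp [pd, fderiv_const_mul hf]

lemma pd_const (c : ℝ) (x v : ℝ × ℝ) : pd v (fun _ => c) x = 0 := by
  simp [pd]

lemma pd_congr {f g : ℝ × ℝ → ℝ} {x : ℝ × ℝ} (h : f =ᶠ[nhds x] g) (v : ℝ × ℝ) :
    pd v f x = pd v g x := by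
  simp only [pd]; rw [h.fderiv_eq]

lemma pd_contDiffAt {f : ℝ × ℝ → ℝ} {x : ℝ × ℝ} {n m : WithTop ℕ∞}
    (hf : ContDiffAt ℝ n f x) (h : m + 1 ≤ n) (v : ℝ × ℝ) :
    ContDiffAt ℝ m (pd v f) x :=
  (hf.fderiv_right h).clm_apply contDiffAt_const

lemma pd_diff {f : ℝ × ℝ → ℝ} {x : ℝ × ℝ} {n : WithTop ℕ∞}
    (hf : ContDiffAt ℝ n f x) (h : 2 ≤ n) (v : ℝ × ℝ) :
    DifferentiableAt ℝ (pd v f) x := by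
  have h1 : (1 : WithTop ℕ∞) + 1 ≤ n := by
    calc (1 : WithTop ℕ∞) + 1 = 2 := by norm_num
    _ ≤ n := h
  exact (pd_contDiffAt hf h1 v).differentiableAt (by norm_num)

lemma pd_swap {f : ℝ × ℝ → ℝ} {x : ℝ × ℝ} {n : WithTop ℕ∞}
    (hf : ContDiffAt ℝ n f x) (h : 2 ≤ n) (v w : ℝ × ℝ) :
    pd v (pd w f) x = pd w (pd v f) x := by
  have hsymm : IsSymmSndFDerivAt ℝ f x := hf.isSymmSndFDerivAt (by simpa using h)
  have hd : DifferentiableAt ℝ (fderiv ℝ f) x := by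
    have h1 : (1 : WithTop ℕ∞) + 1 ≤ n := by
      calc (1 : WithTop ℕ∞) + 1 = 2 := by norm_num
      _ ≤ n := h
    exact (hf.fderiv_right h1).differentiableAt (by norm_num)
  have key : ∀ a b : ℝ × ℝ, pd a (pd b f) x = fderiv ℝ (fderiv ℝ f) x a b := by
    intro a b
    show fderiv ℝ (fun y => (fderiv ℝ f y) b) x a = _
    rw [fderiv_clm_apply hd (differentiableAt_const b)]
    simp
  rw [key, key, hsymm v w]

lemma pd_expand1 {A B C D E : ℝ × ℝ → ℝ} {x : ℝ × ℝ} (c : ℝ)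
    (hA : DifferentiableAt ℝ A x) (hB : DifferentiableAt ℝ B x)
    (hC : DifferentiableAt ℝ C x) (hD : DifferentiableAt ℝ D x)
    (hE : DifferentiableAt ℝ E x) (v : ℝ × ℝ) :
    pd v (fun y => c * (A y + B y) + C y * (D y - E y)) x
      = c * (pd v A x + pd v B x)
        + (pd v C x * (D x - E x) + C x * (pd v D x - pd v E x)) := by
  rw [pd_add ((hA.fun_add hB).const_mul c) (hC.fun_mul (hD.fun_sub hE)),
    pd_const_mul (hA.fun_add hB) c, pd_add hA hB, pd_mul hC (hD.fun_sub hE), pd_sub hD hE]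

lemma pd_expand2 {A B C D E : ℝ × ℝ → ℝ} {x : ℝ × ℝ} (c : ℝ)
    (hA : DifferentiableAt ℝ A x) (hB : DifferentiableAt ℝ B x)
    (hC : DifferentiableAt ℝ C x) (hD : DifferentiableAt ℝ D x)
    (hE : DifferentiableAt ℝ E x) (v : ℝ × ℝ) :
    pd v (fun y => c * (A y + B y) - C y * (D y - E y)) x
      = c * (pd v A x + pd v B x)
        - (pd v C x * (D x - E x) + C x * (pd v D x - pd v E x)) := by
  rw [pd_sub ((hA.fun_add hB).const_mul c) (hC.fun_mul (hD.fun_sub hE)),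
    pd_const_mul (hA.fun_add hB) c, pd_add hA hB, pd_mul hC (hD.fun_sub hE), pd_sub hD hE]

theorem stmt_7 (U : Set (ℝ × ℝ)) (hU : IsOpen U) (ν : ℝ) (hν : 0 < ν)
    (u : ℝ × ℝ → ℝ × ℝ) (p : ℝ × ℝ → ℝ)
    (hu : ContDiffOn ℝ 3 u U) (hp : ContDiffOn ℝ 3 p U)
    (u1 u2 : ℝ × ℝ → ℝ) (hu1 : u1 = fun x => (u x).1) (hu2 : u2 = fun x => (u x).2)
    (hNS1 : ∀ x ∈ U, -ν * (pdx (pdx u1) x + pdy (pdy u1) x)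
        + (u1 x * pdx u1 x + u2 x * pdy u1 x) + pdx p x = 0)
    (hNS2 : ∀ x ∈ U, -ν * (pdx (pdx u2) x + pdy (pdy u2) x)
        + (u1 x * pdx u2 x + u2 x * pdy u2 x) + pdy p x = 0)
    (hdiv : ∀ x ∈ U, pdx u1 x + pdy u2 x = 0)
    (ω Φ : ℝ × ℝ → ℝ)
    (hω : ω = fun x => pdx u2 x - pdy u1 x)
    (hΦ : Φ = fun x => p x + (1/2) * (u1 x ^ 2 + u2 x ^ 2)) :
    ∀ x ∈ U, pdx (pdx Φ) x + pdy (pdy Φ) x =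
      ω x ^ 2 + (1/ν) * (pdx (fun y => Φ y * u1 y) x + pdy (fun y => Φ y * u2 y) x) := by
  have hν' : ν ≠ 0 := ne_of_gt hν
  simp only [hω, hΦ, pdx_eq, pdy_eq] at hNS1 hNS2 hdiv ⊢
  -- smoothness of the components
  have cu1 : ∀ y ∈ U, ContDiffAt ℝ 3 u1 y := by
    intro y hy; rw [hu1]
    exact contDiff_fst.contDiffAt.comp y (hu.contDiffAt (hU.mem_nhds hy))
  have cu2 : ∀ y ∈ U, ContDiffAt ℝ 3 u2 y := by
    intro y hy; rw [hu2]
    exact contDiff_snd.contDiffAt.comp y (hu.contDiffAt (hU.mem_nhds hy))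
  have cp : ∀ y ∈ U, ContDiffAt ℝ 3 p y := fun y hy => hp.contDiffAt (hU.mem_nhds hy)
  have h23 : (2 : WithTop ℕ∞) + 1 ≤ 3 := by norm_num
  have h2le3 : (2 : WithTop ℕ∞) ≤ 3 := by norm_num
  have du1 : ∀ y ∈ U, DifferentiableAt ℝ u1 y :=
    fun y hy => (cu1 y hy).differentiableAt (by norm_num)
  have du2 : ∀ y ∈ U, DifferentiableAt ℝ u2 y :=
    fun y hy => (cu2 y hy).differentiableAt (by norm_num)
  have dp : ∀ y ∈ U, DifferentiableAt ℝ p y :=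
    fun y hy => (cp y hy).differentiableAt (by norm_num)
  have cpu1 : ∀ (v : ℝ × ℝ), ∀ y ∈ U, ContDiffAt ℝ 2 (pd v u1) y :=
    fun v y hy => pd_contDiffAt (cu1 y hy) h23 v
  have cpu2 : ∀ (v : ℝ × ℝ), ∀ y ∈ U, ContDiffAt ℝ 2 (pd v u2) y :=
    fun v y hy => pd_contDiffAt (cu2 y hy) h23 v
  have dpu1 : ∀ (v : ℝ × ℝ), ∀ y ∈ U, DifferentiableAt ℝ (pd v u1) y :=
    fun v y hy => pd_diff (cu1 y hy) h2le3 v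
  have dpu2 : ∀ (v : ℝ × ℝ), ∀ y ∈ U, DifferentiableAt ℝ (pd v u2) y :=
    fun v y hy => pd_diff (cu2 y hy) h2le3 v
  have dppu1 : ∀ (v w : ℝ × ℝ), ∀ y ∈ U, DifferentiableAt ℝ (pd v (pd w u1)) y :=
    fun v w y hy => pd_diff (cpu1 w y hy) le_rfl v
  have dppu2 : ∀ (v w : ℝ × ℝ), ∀ y ∈ U, DifferentiableAt ℝ (pd v (pd w u2)) y :=
    fun v w y hy => pd_diff (cpu2 w y hy) le_rfl v
  have dPhi : ∀ y ∈ U, DifferentiableAt ℝ (fun z => p z + 1/2 * (u1 z ^ 2 + u2 z ^ 2)) y :=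
    fun y hy => (dp y hy).add ((((du1 y hy).pow 2).add ((du2 y hy).pow 2)).const_mul (1/2))
  -- gradient of Φ
  have gradPhi : ∀ (v : ℝ × ℝ), ∀ y ∈ U,
      pd v (fun z => p z + 1/2 * (u1 z ^ 2 + u2 z ^ 2)) y
        = pd v p y + u1 y * pd v u1 y + u2 y * pd v u2 y := by
    intro v y hy
    have hfun : (fun z => p z + 1/2 * (u1 z ^ 2 + u2 z ^ 2))
        = fun z => p z + (1/2 * (u1 z * u1 z) + 1/2 * (u2 z * u2 z)) := by
      funext z; ring
    rw [hfun, pd_add (dp y hy)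
        ((((du1 y hy).fun_mul (du1 y hy)).const_mul (1/2)).fun_add
          (((du2 y hy).fun_mul (du2 y hy)).const_mul (1/2))),
      pd_add (((du1 y hy).fun_mul (du1 y hy)).const_mul (1/2))
        (((du2 y hy).fun_mul (du2 y hy)).const_mul (1/2)),
      pd_const_mul ((du1 y hy).fun_mul (du1 y hy)) (1/2),
      pd_const_mul ((du2 y hy).fun_mul (du2 y hy)) (1/2),
      pd_mul (du1 y hy) (du1 y hy), pd_mul (du2 y hy) (du2 y hy)]
    ring
  -- the two Bernoulli-gradient identities on U
  have fact1 : ∀ y ∈ U, pd (1,0) (fun z => p z + 1/2 * (u1 z ^ 2 + u2 z ^ 2)) y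
      = ν * (pd (1,0) (pd (1,0) u1) y + pd (0,1) (pd (0,1) u1) y)
        + u2 y * (pd (1,0) u2 y - pd (0,1) u1 y) := by
    intro y hy
    rw [gradPhi (1,0) y hy]
    linarith [hNS1 y hy]
  have fact2 : ∀ y ∈ U, pd (0,1) (fun z => p z + 1/2 * (u1 z ^ 2 + u2 z ^ 2)) y
      = ν * (pd (1,0) (pd (1,0) u2) y + pd (0,1) (pd (0,1) u2) y)
        - u1 y * (pd (1,0) u2 y - pd (0,1) u1 y) := by
    intro y hy
    rw [gradPhi (0,1) y hy]
    linarith [hNS2 y hy]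
  -- first derivatives of the divergence identity
  have hdiv1 : ∀ (v : ℝ × ℝ), ∀ y ∈ U,
      pd v (pd (1,0) u1) y + pd v (pd (0,1) u2) y = 0 := by
    intro v y hy
    have h0 : pd v (fun z => pd (1,0) u1 z + pd (0,1) u2 z) y = pd v (fun _ => (0:ℝ)) y :=
      pd_congr (Filter.eventuallyEq_of_mem (hU.mem_nhds hy) (fun z hz => hdiv z hz)) v
    rw [pd_add (dpu1 (1,0) y hy) (dpu2 (0,1) y hy), pd_const] at h0
    exact h0
  -- Clairaut on U for u1, u2
  have hsw1U : ∀ y ∈ U, pd (1,0) (pd (0,1) u1) y = pd (0,1) (pd (1,0) u1) y :=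
    fun y hy => pd_swap (cu1 y hy) h2le3 (1,0) (0,1)
  have hsw2U : ∀ y ∈ U, pd (1,0) (pd (0,1) u2) y = pd (0,1) (pd (1,0) u2) y :=
    fun y hy => pd_swap (cu2 y hy) h2le3 (1,0) (0,1)
  intro x hx
  -- second derivatives of the divergence identity, at x
  have hdiv2 : ∀ (v w : ℝ × ℝ),
      pd v (pd w (pd (1,0) u1)) x + pd v (pd w (pd (0,1) u2)) x = 0 := by
    intro v w
    have h0 : pd v (fun z => pd w (pd (1,0) u1) z + pd w (pd (0,1) u2) z) x
        = pd v (fun _ => (0:ℝ)) x :=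
      pd_congr (Filter.eventuallyEq_of_mem (hU.mem_nhds hx) (fun z hz => hdiv1 w z hz)) v
    rw [pd_add (dppu1 w (1,0) x hx) (dppu2 w (0,1) x hx), pd_const] at h0
    exact h0
  have h1 : pd (1,0) u1 x + pd (0,1) u2 x = 0 := hdiv x hx
  have h2 : pd (1,0) (pd (1,0) u1) x + pd (1,0) (pd (0,1) u2) x = 0 := hdiv1 (1,0) x hx
  have h3 : pd (0,1) (pd (1,0) u1) x + pd (0,1) (pd (0,1) u2) x = 0 := hdiv1 (0,1) x hx
  have h4 : pd (1,0) (pd (0,1) u1) x = pd (0,1) (pd (1,0) u1) x := hsw1U x hx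
  have h5 : pd (1,0) (pd (0,1) u2) x = pd (0,1) (pd (1,0) u2) x := hsw2U x hx
  have h6 : pd (1,0) (pd (1,0) (pd (1,0) u1)) x + pd (1,0) (pd (1,0) (pd (0,1) u2)) x = 0 :=
    hdiv2 (1,0) (1,0)
  have h7 : pd (0,1) (pd (0,1) (pd (1,0) u1)) x + pd (0,1) (pd (0,1) (pd (0,1) u2)) x = 0 :=
    hdiv2 (0,1) (0,1)
  -- third-derivative swaps
  have h8 : pd (1,0) (pd (0,1) (pd (0,1) u1)) x = pd (0,1) (pd (0,1) (pd (1,0) u1)) x := by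
    have s1 : pd (1,0) (pd (0,1) (pd (0,1) u1)) x = pd (0,1) (pd (1,0) (pd (0,1) u1)) x :=
      pd_swap (cpu1 (0,1) x hx) le_rfl (1,0) (0,1)
    have s2 : pd (0,1) (pd (1,0) (pd (0,1) u1)) x = pd (0,1) (pd (0,1) (pd (1,0) u1)) x :=
      pd_congr (Filter.eventuallyEq_of_mem (hU.mem_nhds hx) (fun z hz => hsw1U z hz)) (0,1)
    rw [s1, s2]
  have h9 : pd (1,0) (pd (1,0) (pd (0,1) u2)) x = pd (0,1) (pd (1,0) (pd (1,0) u2)) x := by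
    have s1 : pd (1,0) (pd (1,0) (pd (0,1) u2)) x = pd (1,0) (pd (0,1) (pd (1,0) u2)) x :=
      pd_congr (Filter.eventuallyEq_of_mem (hU.mem_nhds hx) (fun z hz => hsw2U z hz)) (1,0)
    have s2 : pd (1,0) (pd (0,1) (pd (1,0) u2)) x = pd (0,1) (pd (1,0) (pd (1,0) u2)) x :=
      pd_swap (cpu2 (1,0) x hx) le_rfl (1,0) (0,1)
    rw [s1, s2]
  -- expand the LHS second derivatives of Φ
  have hA : pd (1,0) (pd (1,0) (fun z => p z + 1/2 * (u1 z ^ 2 + u2 z ^ 2))) x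
      = ν * (pd (1,0) (pd (1,0) (pd (1,0) u1)) x + pd (1,0) (pd (0,1) (pd (0,1) u1)) x)
        + (pd (1,0) u2 x * (pd (1,0) u2 x - pd (0,1) u1 x)
          + u2 x * (pd (1,0) (pd (1,0) u2) x - pd (1,0) (pd (0,1) u1) x)) := by
    have hc : pd (1,0) (pd (1,0) (fun z => p z + 1/2 * (u1 z ^ 2 + u2 z ^ 2))) x
        = pd (1,0) (fun y => ν * (pd (1,0) (pd (1,0) u1) y + pd (0,1) (pd (0,1) u1) y)
            + u2 y * (pd (1,0) u2 y - pd (0,1) u1 y)) x :=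
      pd_congr (Filter.eventuallyEq_of_mem (hU.mem_nhds hx) (fun z hz => fact1 z hz)) (1,0)
    rw [hc]
    exact pd_expand1 ν (dppu1 (1,0) (1,0) x hx) (dppu1 (0,1) (0,1) x hx) (du2 x hx)
      (dpu2 (1,0) x hx) (dpu1 (0,1) x hx) (1,0)
  have hB : pd (0,1) (pd (0,1) (fun z => p z + 1/2 * (u1 z ^ 2 + u2 z ^ 2))) x
      = ν * (pd (0,1) (pd (1,0) (pd (1,0) u2)) x + pd (0,1) (pd (0,1) (pd (0,1) u2)) x)
        - (pd (0,1) u1 x * (pd (1,0) u2 x - pd (0,1) u1 x)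
          + u1 x * (pd (0,1) (pd (1,0) u2) x - pd (0,1) (pd (0,1) u1) x)) := by
    have hc : pd (0,1) (pd (0,1) (fun z => p z + 1/2 * (u1 z ^ 2 + u2 z ^ 2))) x
        = pd (0,1) (fun y => ν * (pd (1,0) (pd (1,0) u2) y + pd (0,1) (pd (0,1) u2) y)
            - u1 y * (pd (1,0) u2 y - pd (0,1) u1 y)) x :=
      pd_congr (Filter.eventuallyEq_of_mem (hU.mem_nhds hx) (fun z hz => fact2 z hz)) (0,1)
    rw [hc]
    exact pd_expand2 ν (dppu2 (1,0) (1,0) x hx) (dppu2 (0,1) (0,1) x hx) (du1 x hx)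
      (dpu2 (1,0) x hx) (dpu1 (0,1) x hx) (0,1)
  -- expand the RHS divergence term
  have hC : pd (1,0) (fun y => (p y + 1/2 * (u1 y ^ 2 + u2 y ^ 2)) * u1 y) x
      = pd (1,0) (fun z => p z + 1/2 * (u1 z ^ 2 + u2 z ^ 2)) x * u1 x
        + (p x + 1/2 * (u1 x ^ 2 + u2 x ^ 2)) * pd (1,0) u1 x :=
    pd_mul (dPhi x hx) (du1 x hx) (1,0)
  have hD : pd (0,1) (fun y => (p y + 1/2 * (u1 y ^ 2 + u2 y ^ 2)) * u2 y) x
      = pd (0,1) (fun z => p z + 1/2 * (u1 z ^ 2 + u2 z ^ 2)) x * u2 x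
        + (p x + 1/2 * (u1 x ^ 2 + u2 x ^ 2)) * pd (0,1) u2 x :=
    pd_mul (dPhi x hx) (du2 x hx) (0,1)
  have hCD : (1/ν) * (pd (1,0) (fun y => (p y + 1/2 * (u1 y ^ 2 + u2 y ^ 2)) * u1 y) x
        + pd (0,1) (fun y => (p y + 1/2 * (u1 y ^ 2 + u2 y ^ 2)) * u2 y) x)
      = u1 x * (pd (1,0) (pd (1,0) u1) x + pd (0,1) (pd (0,1) u1) x)
        + u2 x * (pd (1,0) (pd (1,0) u2) x + pd (0,1) (pd (0,1) u2) x) := by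
    rw [hC, hD, fact1 x hx, fact2 x hx]
    have hq2 : pd (0,1) u2 x = -pd (1,0) u1 x := by linarith
    rw [hq2]
    field_simp
    ring
  linear_combination hA + hB - hCD + ν*h6 + ν*h7 + ν*h8 - ν*h9
    - u2 x*h4 - u2 x*h3 + u1 x*h5 - u1 x*h2
end
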